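/- Let k be an integer with 0 ≤ k ≤ m-1, and define a = (γ^(2m+6k+2) + γ^(m+3k+1) + 1)/(3γ^(m+3k+1)), b = (γ^(2m) + γ^(m+3k+1) + γ^(6k+2))/(3γ^(m+3k+1)), c = (γ^(6k+2) + γ^(3k+1) + 1)/(3γ^(3k+1)) in F_q, and let g(x) = a·x^(2m+1) + b·x^(m+1) + c·x. Then for every integer i with 0 ≤ i ≤ m-1 one has g(γ^(3i+1)) = γ^(3(i+k)+2). -/

import Mathlib

lemma key_alg {F : Type*} [Field F] (A B y : F) (h3 : (3:F) ≠ 0) (hA : A ≠ 0) (hB : B ≠ 0)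
    (hω : A^2 + A + 1 = 0) :
    ((A^2*B^2 + A*B + 1) / (3 * (A*B))) * (A^2*y) + ((A^2 + A*B + B^2) / (3 * (A*B))) * (A*y)
      + ((B^2+B+1) / (3*B)) * y = B*y := by
  field_simp
  ring_nf
  linear_combination (y*(B^2*A + 1 + B - B^2)) * hω

theorem stmt2 (q m : ℕ) (F : Type*) [Field F] [Fintype F]
    (hq : Fintype.card F = q) (hodd : Odd q) (hq3 : q % 3 = 1)
    (hm : m = (q - 1) / 3)
    (γ : Fˣ) (hγ : ∀ x : Fˣ, x ∈ Subgroup.zpowers γ)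
    (k : ℕ) (hk : k ≤ m - 1)
    (a b c : F)
    (ha : a = ((γ : F)^(2*m+6*k+2) + (γ : F)^(m+3*k+1) + 1) / (3 * (γ : F)^(m+3*k+1)))
    (hb : b = ((γ : F)^(2*m) + (γ : F)^(m+3*k+1) + (γ : F)^(6*k+2)) / (3 * (γ : F)^(m+3*k+1)))
    (hc : c = ((γ : F)^(6*k+2) + (γ : F)^(3*k+1) + 1) / (3 * (γ : F)^(3*k+1)))
    (g : F → F)
    (hg : ∀ x : F, g x = a * x^(2*m+1) + b * x^(m+1) + c * x) :
    ∀ i : ℕ, i ≤ m - 1 → g ((γ : F)^(3*i+1)) = (γ : F)^(3*(i+k)+2) := by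
  classical
  have hq2 : 2 ≤ q := hq ▸ Fintype.one_lt_card
  have hm3 : 3 * m = q - 1 := by omega
  have hm0 : 0 < m := by omega
  set u : F := (γ : F) with hu_def
  have hu : u ≠ 0 := Units.ne_zero γ
  -- u ^ (3*m) = 1
  have h3m : u ^ (3*m) = 1 := by
    rw [hm3, ← hq]
    exact FiniteField.pow_card_sub_one_eq_one u hu
  -- 3 ≠ 0 in F
  have hcard : ((q : ℕ) : F) = 0 := by rw [← hq]; exact Nat.cast_card_eq_zero F
  have h3 : (3 : F) ≠ 0 := by
    intro h30
    have hq' : q = 3 * (q / 3) + 1 := by omega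
    have : ((q : ℕ) : F) = 1 := by
      rw [hq']; push_cast; rw [h30]; ring
    rw [hcard] at this
    exact one_ne_zero this.symm
  -- order of γ
  have hord : orderOf γ = q - 1 := by
    rw [orderOf_eq_card_of_forall_mem_zpowers hγ, Nat.card_eq_fintype_card, Fintype.card_units, hq]
  have hwne : u ^ m ≠ 1 := by
    intro hone
    have : γ ^ m = 1 := Units.ext (by rw [Units.val_pow_eq_pow_val, Units.val_one]; exact hone)
    have hdvd := orderOf_dvd_of_pow_eq_one this
    rw [hord] at hdvd
    have := Nat.le_of_dvd hm0 hdvd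
    omega
  have hω : (u^m)^2 + u^m + 1 = 0 := by
    have hw3 : (u^m)^3 = 1 := by rw [← pow_mul, mul_comm, h3m]
    have hz : (u^m - 1) * ((u^m)^2 + u^m + 1) = 0 := by linear_combination hw3
    rcases mul_eq_zero.mp hz with h | h
    · exact absurd (sub_eq_zero.mp h) hwne
    · exact h
  intro i hi
  rw [hg, ha, hb, hc]
  have e1 : (u^(3*i+1))^(2*m+1) = (u^m)^2 * u^(3*i+1) := by
    rw [← pow_mul, ← pow_mul, ← pow_add,
      show (3*i+1)*(2*m+1) = 3*m*(2*i) + (m*2 + (3*i+1)) by ring, pow_add, pow_mul, h3m,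
      one_pow, one_mul]
  have e2 : (u^(3*i+1))^(m+1) = u^m * u^(3*i+1) := by
    rw [← pow_mul, ← pow_add,
      show (3*i+1)*(m+1) = 3*m*i + (m + (3*i+1)) by ring, pow_add, pow_mul, h3m,
      one_pow, one_mul]
  have e3 : u^(3*(i+k)+2) = u^(3*k+1) * u^(3*i+1) := by
    rw [← pow_add]; congr 1; ring
  have e4 : u^(2*m+6*k+2) = (u^m)^2 * (u^(3*k+1))^2 := by
    rw [← pow_mul, ← pow_mul, ← pow_add]; congr 1; ring
  have e5 : u^(m+3*k+1) = u^m * u^(3*k+1) := by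
    rw [← pow_add]; congr 1
  have e6 : u^(6*k+2) = (u^(3*k+1))^2 := by
    rw [← pow_mul]; congr 1; ring
  have e7 : u^(2*m) = (u^m)^2 := by
    rw [← pow_mul]; congr 1; ring
  rw [e1, e2, e3, e4, e5, e6, e7]
  exact key_alg (u^m) (u^(3*k+1)) (u^(3*i+1)) h3 (pow_ne_zero _ hu) (pow_ne_zero _ hu) hω
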